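/- arXiv:1403.2566 — 2 statements merged into one kernel-verified Lean document; each statement's English description precedes it below -/
import Mathlib

section
/- Let k ∈ ℤ \ {0}, R > 0, s₊ > 0 and define the reduced Dirichlet energy E₀(u,v) = ∫₀^R (1/2)( u'(r)² + v'(r)² + (k²/r²) u(r)² ) r dr. For the explicit profiles u₋, v₋ (with u₋(r) = 2√2 s₊ R^{|k|} r^{|k|}/(r^{2|k|}+3R^{2|k|}), v₋(r) = √(2/3) s₊ (r^{2|k|}−3R^{2|k|})/(r^{2|k|}+3R^{2|k|})), one has 2π E₀(u₋, v₋) = (2/3) |k| π s₊². -/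
noncomputable section

/-- u₋ profile -/
def uminus (k : ℤ) (R s : ℝ) (r : ℝ) : ℝ :=
  2 * Real.sqrt 2 * s * (R ^ k.natAbs * r ^ k.natAbs) / (r ^ (2 * k.natAbs) + 3 * R ^ (2 * k.natAbs))

/-- v₋ profile -/
def vminus (k : ℤ) (R s : ℝ) (r : ℝ) : ℝ :=
  Real.sqrt (2 / 3) * s * (r ^ (2 * k.natAbs) - 3 * R ^ (2 * k.natAbs)) / (r ^ (2 * k.natAbs) + 3 * R ^ (2 * k.natAbs))

/-- reduced Dirichlet energy E₀(u,v) -/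
def E0 (k : ℤ) (R : ℝ) (u v : ℝ → ℝ) : ℝ :=
  ∫ r in (0 : ℝ)..R,
    (1 / 2) * ((deriv u r) ^ 2 + (deriv v r) ^ 2 + ((k : ℝ) ^ 2 / r ^ 2) * (u r) ^ 2) * r

lemma Dpos (n : ℕ) (R : ℝ) (hR : 0 < R) (r : ℝ) : 0 < r ^ (2 * n) + 3 * R ^ (2 * n) := by
  have h1 : 0 ≤ r ^ (2 * n) := by
    rw [mul_comm, pow_mul]; positivity
  have h2 : 0 < R ^ (2 * n) := pow_pos hR _
  linarith

lemma hasDerivAt_U (n : ℕ) (R s : ℝ) (hR : 0 < R) (r : ℝ) :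
    HasDerivAt (fun r : ℝ => 2 * Real.sqrt 2 * s * (R ^ n * r ^ n) / (r ^ (2 * n) + 3 * R ^ (2 * n)))
      ((2 * Real.sqrt 2 * s * (R ^ n * ((n : ℝ) * r ^ (n - 1))) * (r ^ (2 * n) + 3 * R ^ (2 * n))
        - 2 * Real.sqrt 2 * s * (R ^ n * r ^ n) * ((2 * n : ℕ) * r ^ (2 * n - 1)))
        / (r ^ (2 * n) + 3 * R ^ (2 * n)) ^ 2) r := by
  have hN : HasDerivAt (fun r : ℝ => 2 * Real.sqrt 2 * s * (R ^ n * r ^ n))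
      (2 * Real.sqrt 2 * s * (R ^ n * ((n : ℝ) * r ^ (n - 1)))) r :=
    (((hasDerivAt_pow n r).const_mul (R ^ n)).const_mul (2 * Real.sqrt 2 * s))
  have hD : HasDerivAt (fun r : ℝ => r ^ (2 * n) + 3 * R ^ (2 * n))
      (((2 * n : ℕ) : ℝ) * r ^ (2 * n - 1)) r := (hasDerivAt_pow (2 * n) r).add_const _
  exact hN.div hD (Dpos n R hR r).ne'

lemma hasDerivAt_V (n : ℕ) (R s : ℝ) (hR : 0 < R) (r : ℝ) :
    HasDerivAt (fun r : ℝ => Real.sqrt (2/3) * s * (r ^ (2 * n) - 3 * R ^ (2 * n)) / (r ^ (2 * n) + 3 * R ^ (2 * n)))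
      ((Real.sqrt (2/3) * s * ((2 * n : ℕ) * r ^ (2 * n - 1)) * (r ^ (2 * n) + 3 * R ^ (2 * n))
        - Real.sqrt (2/3) * s * (r ^ (2 * n) - 3 * R ^ (2 * n)) * ((2 * n : ℕ) * r ^ (2 * n - 1)))
        / (r ^ (2 * n) + 3 * R ^ (2 * n)) ^ 2) r := by
  have hN : HasDerivAt (fun r : ℝ => Real.sqrt (2/3) * s * (r ^ (2 * n) - 3 * R ^ (2 * n)))
      (Real.sqrt (2/3) * s * ((2 * n : ℕ) * r ^ (2 * n - 1))) r :=
    (((hasDerivAt_pow (2 * n) r).sub_const _).const_mul (Real.sqrt (2/3) * s))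
  have hD : HasDerivAt (fun r : ℝ => r ^ (2 * n) + 3 * R ^ (2 * n))
      (((2 * n : ℕ) : ℝ) * r ^ (2 * n - 1)) r := (hasDerivAt_pow (2 * n) r).add_const _
  exact hN.div hD (Dpos n R hR r).ne'

lemma sq_sqrt2 (s Y : ℝ) : (2 * Real.sqrt 2 * s * Y) ^ 2 = 8 * s ^ 2 * Y ^ 2 := by
  have h : (Real.sqrt 2) ^ 2 = 2 := Real.sq_sqrt (by norm_num)
  linear_combination (4 * s ^ 2 * Y ^ 2) * h

lemma sq_sqrt23 (s Z : ℝ) : (Real.sqrt (2/3) * s * Z) ^ 2 = (2/3) * s ^ 2 * Z ^ 2 := by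
  have h : (Real.sqrt (2/3)) ^ 2 = 2/3 := Real.sq_sqrt (by norm_num)
  linear_combination (s ^ 2 * Z ^ 2) * h

lemma pointwise (m : ℕ) (R s r : ℝ) (hR : 0 < R) (hr : r ≠ 0) :
    (1/2) * (
      (((2 * Real.sqrt 2 * s * (R ^ (m+1) * (((m+1 : ℕ) : ℝ) * r ^ (m+1-1))) * (r ^ (2*(m+1)) + 3 * R ^ (2*(m+1)))
        - 2 * Real.sqrt 2 * s * (R ^ (m+1) * r ^ (m+1)) * (((2*(m+1) : ℕ) : ℝ) * r ^ (2*(m+1)-1)))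
        / (r ^ (2*(m+1)) + 3 * R ^ (2*(m+1))) ^ 2) ^ 2)
      + (((Real.sqrt (2/3) * s * (((2*(m+1) : ℕ) : ℝ) * r ^ (2*(m+1)-1)) * (r ^ (2*(m+1)) + 3 * R ^ (2*(m+1)))
        - Real.sqrt (2/3) * s * (r ^ (2*(m+1)) - 3 * R ^ (2*(m+1))) * (((2*(m+1) : ℕ) : ℝ) * r ^ (2*(m+1)-1)))
        / (r ^ (2*(m+1)) + 3 * R ^ (2*(m+1))) ^ 2) ^ 2)
      + ((((m+1 : ℕ) : ℝ)) ^ 2 / r ^ 2) *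
        (2 * Real.sqrt 2 * s * (R ^ (m+1) * r ^ (m+1)) / (r ^ (2*(m+1)) + 3 * R ^ (2*(m+1)))) ^ 2) * r
    = 8 * ((m+1 : ℕ) : ℝ) ^ 2 * s ^ 2 * R ^ (2*(m+1)) * r ^ (2*m+1)
        / (r ^ (2*(m+1)) + 3 * R ^ (2*(m+1))) ^ 2 := by
  have h1 : m + 1 - 1 = m := by omega
  have h2 : 2 * (m+1) - 1 = 2*m+1 := by omega
  have h3 : 2 * (m+1) = 2*m+2 := by omega
  rw [h1, h2, h3]
  have hD : (0 : ℝ) < r ^ (2*m+2) + 3 * R ^ (2*m+2) := by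
    have := Dpos (m+1) R hR r
    rwa [h3] at this
  set D : ℝ := r ^ (2*m+2) + 3 * R ^ (2*m+2) with hDdef
  push_cast
  rw [show (2 * Real.sqrt 2 * s * (R ^ (m+1) * (((m:ℝ)+1) * r ^ m)) * D
        - 2 * Real.sqrt 2 * s * (R ^ (m+1) * r ^ (m+1)) * (((2*(m:ℝ)+2)) * r ^ (2*m+1))) / D ^ 2
      = 2 * Real.sqrt 2 * s * (((R ^ (m+1) * (((m:ℝ)+1) * r ^ m)) * D
        - (R ^ (m+1) * r ^ (m+1)) * (((2*(m:ℝ)+2)) * r ^ (2*m+1))) / D ^ 2) by ring]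
  rw [show (Real.sqrt (2/3) * s * (((2*(m:ℝ)+2)) * r ^ (2*m+1)) * D
        - Real.sqrt (2/3) * s * (r ^ (2*m+2) - 3 * R ^ (2*m+2)) * (((2*(m:ℝ)+2)) * r ^ (2*m+1))) / D ^ 2
      = Real.sqrt (2/3) * s * (((((2*(m:ℝ)+2)) * r ^ (2*m+1)) * D
        - (r ^ (2*m+2) - 3 * R ^ (2*m+2)) * (((2*(m:ℝ)+2)) * r ^ (2*m+1))) / D ^ 2) by ring]
  rw [show 2 * Real.sqrt 2 * s * (R ^ (m+1) * r ^ (m+1)) / D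
      = 2 * Real.sqrt 2 * s * ((R ^ (m+1) * r ^ (m+1)) / D) by ring]
  rw [sq_sqrt2, sq_sqrt23, sq_sqrt2]
  rw [hDdef]
  have hD' : r ^ (2*m+2) + 3 * R ^ (2*m+2) ≠ 0 := hD.ne'
  field_simp
  ring

lemma integral_f (m : ℕ) (R s : ℝ) (hR : 0 < R) :
    ∫ r in (0:ℝ)..R, 8 * ((m+1 : ℕ) : ℝ) ^ 2 * s ^ 2 * R ^ (2*(m+1)) * r ^ (2*m+1)
        / (r ^ (2*(m+1)) + 3 * R ^ (2*(m+1))) ^ 2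
      = ((m+1 : ℕ) : ℝ) * s ^ 2 / 3 := by
  set n : ℕ := m + 1 with hn
  set F : ℝ → ℝ := fun r => -4 * (n : ℝ) * s ^ 2 * R ^ (2*n) / (r ^ (2*n) + 3 * R ^ (2*n)) with hF
  have hderiv : ∀ r ∈ Set.uIcc (0:ℝ) R,
      HasDerivAt F (8 * (n : ℝ) ^ 2 * s ^ 2 * R ^ (2*n) * r ^ (2*m+1)
        / (r ^ (2*n) + 3 * R ^ (2*n)) ^ 2) r := by
    intro r _
    have hD : HasDerivAt (fun r : ℝ => r ^ (2*n) + 3 * R ^ (2*n))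
        (((2*n : ℕ) : ℝ) * r ^ (2*n - 1)) r := (hasDerivAt_pow (2*n) r).add_const _
    have hne := (Dpos n R hR r).ne'
    have h : HasDerivAt (fun r : ℝ => -4 * (n : ℝ) * s ^ 2 * R ^ (2*n) / (r ^ (2*n) + 3 * R ^ (2*n))) _ r :=
      (hasDerivAt_const r (-4 * (n : ℝ) * s ^ 2 * R ^ (2*n))).div hD hne
    convert h using 1
    have h2 : 2*n - 1 = 2*m+1 := by omega
    rw [h2]
    push_cast [hn]
    field_simp
    ring
  have hcont : Continuous fun r : ℝ => 8 * ((n : ℕ) : ℝ) ^ 2 * s ^ 2 * R ^ (2*n) * r ^ (2*m+1)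
      / (r ^ (2*n) + 3 * R ^ (2*n)) ^ 2 := by
    apply Continuous.div (by continuity) (by continuity)
    intro r
    exact pow_ne_zero _ (Dpos n R hR r).ne'
  have hint := intervalIntegral.integral_eq_sub_of_hasDerivAt hderiv (hcont.intervalIntegrable _ _)
  rw [hint, hF]
  simp only []
  have h0 : (0:ℝ) ^ (2*n) = 0 := zero_pow (by omega)
  rw [h0]
  have hRn : R ^ (2*n) ≠ 0 := (pow_pos hR _).ne'
  field_simp
  ring

theorem energy_of_Yminus (k : ℤ) (hk : k ≠ 0) (R s : ℝ) (hR : 0 < R) (hs : 0 < s) :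
    2 * Real.pi * E0 k R (uminus k R s) (vminus k R s)
      = (2 / 3) * (k.natAbs : ℝ) * Real.pi * s ^ 2 := by
  have hna : k.natAbs ≠ 0 := Int.natAbs_ne_zero.mpr hk
  obtain ⟨m, hm⟩ : ∃ m, k.natAbs = m + 1 := ⟨k.natAbs - 1, by omega⟩
  have hu_eq : uminus k R s = fun r : ℝ =>
      2 * Real.sqrt 2 * s * (R ^ (m+1) * r ^ (m+1)) / (r ^ (2*(m+1)) + 3 * R ^ (2*(m+1))) := by
    funext r; simp only [uminus, hm]
  have hv_eq : vminus k R s = fun r : ℝ =>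
      Real.sqrt (2/3) * s * (r ^ (2*(m+1)) - 3 * R ^ (2*(m+1))) / (r ^ (2*(m+1)) + 3 * R ^ (2*(m+1))) := by
    funext r; simp only [vminus, hm]
  have hk2 : ((k : ℝ)) ^ 2 = ((m+1 : ℕ) : ℝ) ^ 2 := by
    rw [← hm, Nat.cast_natAbs, Int.cast_abs, sq_abs]
  have key : Set.EqOn
      (fun r : ℝ => (1 / 2) * ((deriv (uminus k R s) r) ^ 2 + (deriv (vminus k R s) r) ^ 2
        + ((k : ℝ) ^ 2 / r ^ 2) * (uminus k R s r) ^ 2) * r)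
      (fun r : ℝ => 8 * ((m+1 : ℕ) : ℝ) ^ 2 * s ^ 2 * R ^ (2*(m+1)) * r ^ (2*m+1)
        / (r ^ (2*(m+1)) + 3 * R ^ (2*(m+1))) ^ 2)
      (Set.uIcc (0:ℝ) R) := by
    intro r _
    simp only
    rw [hu_eq, hv_eq, (hasDerivAt_U (m+1) R s hR r).deriv, (hasDerivAt_V (m+1) R s hR r).deriv, hk2]
    rcases eq_or_ne r 0 with rfl | hr
    · simp
    · exact pointwise m R s r hR hr
  rw [E0, intervalIntegral.integral_congr key, integral_f m R s hR, hm]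
  push_cast
  ring
end
end

section
/- Let k ∈ ℤ \ {0}, R > 0, s₊ > 0 and E₀(u,v) = ∫₀^R (1/2)( u'² + v'² + (k²/r²) u² ) r dr. For the profiles u₊(r) = 2√2 s₊ R^{|k|} r^{|k|}/(3r^{2|k|}+R^{2|k|}), v₊(r) = √(2/3) s₊ (R^{2|k|}−3r^{2|k|})/(3r^{2|k|}+R^{2|k|}), one has 2π E₀(u₊, v₊) = 2 |k| π s₊². In particular E₀(u₋,v₋) < E₀(u₊,v₊) where (u₋,v₋) are as in the companion statement. -/
noncomputable section

/-- u₊ profile -/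
def uplus (k : ℤ) (R s : ℝ) (r : ℝ) : ℝ :=
  2 * Real.sqrt 2 * s * (R ^ k.natAbs * r ^ k.natAbs) / (3 * r ^ (2 * k.natAbs) + R ^ (2 * k.natAbs))

/-- v₊ profile -/
def vplus (k : ℤ) (R s : ℝ) (r : ℝ) : ℝ :=
  Real.sqrt (2 / 3) * s * (R ^ (2 * k.natAbs) - 3 * r ^ (2 * k.natAbs)) / (3 * r ^ (2 * k.natAbs) + R ^ (2 * k.natAbs))

private lemma sqrt2_sq : Real.sqrt 2 ^ 2 = 2 := Real.sq_sqrt (by norm_num)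
private lemma sqrt23_sq : Real.sqrt (2/3) ^ 2 = 2/3 := Real.sq_sqrt (by norm_num)

set_option maxHeartbeats 2000000 in
private lemma E0_plus (k : ℤ) (hk : k ≠ 0) (R s : ℝ) (hR : 0 < R) :
    E0 k R (uplus k R s) (vplus k R s) = (k.natAbs : ℝ) * s ^ 2 := by
  have h0 : k.natAbs ≠ 0 := Int.natAbs_ne_zero.mpr hk
  obtain ⟨p, hp⟩ : ∃ p : ℕ, k.natAbs = p + 1 := ⟨k.natAbs - 1, by omega⟩
  have hk2 : ((k:ℝ))^2 = ((p:ℝ)+1)^2 := by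
    have : ((k:ℝ))^2 = ((k.natAbs:ℝ))^2 := by
      simp [Nat.cast_natAbs, Int.cast_abs, sq_abs]
    rw [this, hp]; push_cast; ring
  have hup : uplus k R s = fun x : ℝ =>
      2*Real.sqrt 2*s*(R^(p+1)*x^(p+1))/(3*x^(2*(p+1))+R^(2*(p+1))) := by
    funext x; simp only [uplus, hp]
  have hvp : vplus k R s = fun x : ℝ =>
      Real.sqrt (2/3)*s*(R^(2*(p+1))-3*x^(2*(p+1)))/(3*x^(2*(p+1))+R^(2*(p+1))) := by
    funext x; simp only [vplus, hp]
  rw [E0, hup, hvp]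
  simp only [hk2]
  have hee : 2*(p+1) = 2*p+2 := by omega
  have hD : ∀ r : ℝ, 0 < 3*r^(2*(p+1))+R^(2*(p+1)) := by
    intro r
    have h1 : 0 ≤ r^(2*(p+1)) := by
      rw [show 2*(p+1) = (p+1)*2 from by omega, pow_mul]; positivity
    have h2 : (0:ℝ) < R^(2*(p+1)) := by positivity
    nlinarith
  have hD2 : ∀ r : ℝ, 0 < 3*r^(2*p+2)+R^(2*p+2) := by
    intro r; have := hD r; rwa [hee] at this
  have hDd : ∀ r : ℝ, HasDerivAt (fun x : ℝ => 3*x^(2*(p+1))+R^(2*(p+1)))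
      (3*(((2*(p+1):ℕ):ℝ)*r^(2*(p+1)-1))) r := fun r =>
    ((hasDerivAt_pow (2*(p+1)) r).const_mul 3).add_const _
  -- pointwise identity
  have hEq : Set.EqOn
      (fun r : ℝ => 1/2 *
        (deriv (fun x => 2*Real.sqrt 2*s*(R^(p+1)*x^(p+1))/(3*x^(2*(p+1))+R^(2*(p+1)))) r ^ 2 +
         deriv (fun x => Real.sqrt (2/3)*s*(R^(2*(p+1))-3*x^(2*(p+1)))/(3*x^(2*(p+1))+R^(2*(p+1)))) r ^ 2 +
         ((p:ℝ)+1)^2/r^2 * (2*Real.sqrt 2*s*(R^(p+1)*r^(p+1))/(3*r^(2*(p+1))+R^(2*(p+1))))^2) * r)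
      (fun r : ℝ => 8*((p:ℝ)+1)^2*s^2*R^(2*p+2)*r^(2*p+1)/(3*r^(2*p+2)+R^(2*p+2))^2)
      (Set.uIcc 0 R) := by
    intro r _
    rcases eq_or_ne r 0 with rfl | hr0
    · simp [zero_pow (show 2*p+1 ≠ 0 by omega)]
    · dsimp only
      have hu' := (((hasDerivAt_pow (p+1) r).const_mul (R^(p+1))).const_mul
        (2*Real.sqrt 2*s)).div (hDd r) (hD r).ne'
      have hv' := ((((hasDerivAt_pow (2*(p+1)) r).const_mul 3).const_sub
        (R^(2*(p+1)))).const_mul (Real.sqrt (2/3)*s)).div (hDd r) (hD r).ne'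
      have hud : deriv (fun x => 2*Real.sqrt 2*s*(R^(p+1)*x^(p+1))/(3*x^(2*(p+1))+R^(2*(p+1)))) r
          = Real.sqrt 2 * (2*s*((p:ℝ)+1)*R^(p+1)*(R^(2*p+2)*r^p - 3*r^(3*p+2)))
            /(3*r^(2*p+2)+R^(2*p+2))^2 := by
        rw [show deriv (fun x => 2*Real.sqrt 2*s*(R^(p+1)*x^(p+1))/(3*x^(2*(p+1))+R^(2*(p+1)))) r = _ from hu'.deriv, show (p+1) - 1 = p from by omega, show 2*(p+1) - 1 = 2*p+1 from by omega,
          hee]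
        congr 1
        push_cast
        ring
      have hvd : deriv (fun x => Real.sqrt (2/3)*s*(R^(2*(p+1))-3*x^(2*(p+1)))/(3*x^(2*(p+1))+R^(2*(p+1)))) r
          = Real.sqrt (2/3) * (-12*((p:ℝ)+1)*s*R^(2*p+2)*r^(2*p+1))
            /(3*r^(2*p+2)+R^(2*p+2))^2 := by
        rw [show deriv (fun x => Real.sqrt (2/3)*s*(R^(2*(p+1))-3*x^(2*(p+1)))/(3*x^(2*(p+1))+R^(2*(p+1)))) r = _ from hv'.deriv, show 2*(p+1) - 1 = 2*p+1 from by omega, hee]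
        congr 1
        push_cast
        ring
      rw [hud, hvd]
      simp only [hee, div_pow, mul_pow, sqrt2_sq, sqrt23_sq]
      have hDne : (3*r^(2*p+2)+R^(2*p+2)) ≠ 0 := (hD2 r).ne'
      field_simp
      ring
  rw [intervalIntegral.integral_congr hEq]
  rw [intervalIntegral.integral_eq_sub_of_hasDerivAt
    (f := fun x : ℝ => -4*((p:ℝ)+1)*s^2*R^(2*p+2)/(3*(3*x^(2*p+2)+R^(2*p+2))))
    (f' := fun r : ℝ => 8*((p:ℝ)+1)^2*s^2*R^(2*p+2)*r^(2*p+1)/(3*r^(2*p+2)+R^(2*p+2))^2)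
    ?hder ?hint]
  · rw [show (0:ℝ)^(2*p+2) = 0 from zero_pow (by omega), hp]
    have hRne : R^(2*p+2) ≠ 0 := (by positivity : (0:ℝ) < R^(2*p+2)).ne'
    push_cast
    field_simp
    ring
  · intro r _
    have hden : HasDerivAt (fun x : ℝ => 3*(3*x^(2*p+2)+R^(2*p+2)))
        (3*(3*(((2*p+2:ℕ):ℝ)*r^(2*p+2-1)))) r :=
      (((hasDerivAt_pow (2*p+2) r).const_mul 3).add_const (R^(2*p+2))).const_mul 3
    have h1 := (hasDerivAt_const r (-4*((p:ℝ)+1)*s^2*R^(2*p+2))).div hden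
      (mul_ne_zero (by norm_num) (hD2 r).ne')
    refine h1.congr_deriv ?_
    rw [show 2*p+2-1 = 2*p+1 from by omega]
    have hDne : (3*r^(2*p+2)+R^(2*p+2)) ≠ 0 := (hD2 r).ne'
    push_cast
    field_simp
    ring
  · apply Continuous.intervalIntegrable
    apply Continuous.div (by fun_prop) (by fun_prop)
    intro r; exact pow_ne_zero _ (hD2 r).ne'

set_option maxHeartbeats 2000000 in
private lemma E0_minus (k : ℤ) (hk : k ≠ 0) (R s : ℝ) (hR : 0 < R) :
    E0 k R (uminus k R s) (vminus k R s) = (k.natAbs : ℝ) * s ^ 2 / 3 := by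
  have h0 : k.natAbs ≠ 0 := Int.natAbs_ne_zero.mpr hk
  obtain ⟨p, hp⟩ : ∃ p : ℕ, k.natAbs = p + 1 := ⟨k.natAbs - 1, by omega⟩
  have hk2 : ((k:ℝ))^2 = ((p:ℝ)+1)^2 := by
    have : ((k:ℝ))^2 = ((k.natAbs:ℝ))^2 := by
      simp [Nat.cast_natAbs, Int.cast_abs, sq_abs]
    rw [this, hp]; push_cast; ring
  have hup : uminus k R s = fun x : ℝ =>
      2*Real.sqrt 2*s*(R^(p+1)*x^(p+1))/(x^(2*(p+1))+3*R^(2*(p+1))) := by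
    funext x; simp only [uminus, hp]
  have hvp : vminus k R s = fun x : ℝ =>
      Real.sqrt (2/3)*s*(x^(2*(p+1))-3*R^(2*(p+1)))/(x^(2*(p+1))+3*R^(2*(p+1))) := by
    funext x; simp only [vminus, hp]
  rw [E0, hup, hvp]
  simp only [hk2]
  have hee : 2*(p+1) = 2*p+2 := by omega
  have hD : ∀ r : ℝ, 0 < r^(2*(p+1))+3*R^(2*(p+1)) := by
    intro r
    have h1 : 0 ≤ r^(2*(p+1)) := by
      rw [show 2*(p+1) = (p+1)*2 from by omega, pow_mul]; positivity
    have h2 : (0:ℝ) < R^(2*(p+1)) := by positivity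
    nlinarith
  have hD2 : ∀ r : ℝ, 0 < r^(2*p+2)+3*R^(2*p+2) := by
    intro r; have := hD r; rwa [hee] at this
  have hDd : ∀ r : ℝ, HasDerivAt (fun x : ℝ => x^(2*(p+1))+3*R^(2*(p+1)))
      (((2*(p+1):ℕ):ℝ)*r^(2*(p+1)-1)) r := fun r =>
    (hasDerivAt_pow (2*(p+1)) r).add_const _
  -- pointwise identity
  have hEq : Set.EqOn
      (fun r : ℝ => 1/2 *
        (deriv (fun x => 2*Real.sqrt 2*s*(R^(p+1)*x^(p+1))/(x^(2*(p+1))+3*R^(2*(p+1)))) r ^ 2 +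
         deriv (fun x => Real.sqrt (2/3)*s*(x^(2*(p+1))-3*R^(2*(p+1)))/(x^(2*(p+1))+3*R^(2*(p+1)))) r ^ 2 +
         ((p:ℝ)+1)^2/r^2 * (2*Real.sqrt 2*s*(R^(p+1)*r^(p+1))/(r^(2*(p+1))+3*R^(2*(p+1))))^2) * r)
      (fun r : ℝ => 8*((p:ℝ)+1)^2*s^2*R^(2*p+2)*r^(2*p+1)/(r^(2*p+2)+3*R^(2*p+2))^2)
      (Set.uIcc 0 R) := by
    intro r _
    rcases eq_or_ne r 0 with rfl | hr0
    · simp [zero_pow (show 2*p+1 ≠ 0 by omega)]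
    · dsimp only
      have hu' := (((hasDerivAt_pow (p+1) r).const_mul (R^(p+1))).const_mul
        (2*Real.sqrt 2*s)).div (hDd r) (hD r).ne'
      have hv' := (((hasDerivAt_pow (2*(p+1)) r).sub_const
        (3*R^(2*(p+1)))).const_mul (Real.sqrt (2/3)*s)).div (hDd r) (hD r).ne'
      have hud : deriv (fun x => 2*Real.sqrt 2*s*(R^(p+1)*x^(p+1))/(x^(2*(p+1))+3*R^(2*(p+1)))) r
          = Real.sqrt 2 * (2*s*((p:ℝ)+1)*R^(p+1)*(3*R^(2*p+2)*r^p - r^(3*p+2)))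
            /(r^(2*p+2)+3*R^(2*p+2))^2 := by
        rw [show deriv (fun x => 2*Real.sqrt 2*s*(R^(p+1)*x^(p+1))/(x^(2*(p+1))+3*R^(2*(p+1)))) r = _ from hu'.deriv, show (p+1) - 1 = p from by omega, show 2*(p+1) - 1 = 2*p+1 from by omega,
          hee]
        congr 1
        push_cast
        ring
      have hvd : deriv (fun x => Real.sqrt (2/3)*s*(x^(2*(p+1))-3*R^(2*(p+1)))/(x^(2*(p+1))+3*R^(2*(p+1)))) r
          = Real.sqrt (2/3) * (12*((p:ℝ)+1)*s*R^(2*p+2)*r^(2*p+1))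
            /(r^(2*p+2)+3*R^(2*p+2))^2 := by
        rw [show deriv (fun x => Real.sqrt (2/3)*s*(x^(2*(p+1))-3*R^(2*(p+1)))/(x^(2*(p+1))+3*R^(2*(p+1)))) r = _ from hv'.deriv, show 2*(p+1) - 1 = 2*p+1 from by omega, hee]
        congr 1
        push_cast
        ring
      rw [hud, hvd]
      simp only [hee, div_pow, mul_pow, sqrt2_sq, sqrt23_sq]
      have hDne : (r^(2*p+2)+3*R^(2*p+2)) ≠ 0 := (hD2 r).ne'
      field_simp
      ring
  rw [intervalIntegral.integral_congr hEq]
  rw [intervalIntegral.integral_eq_sub_of_hasDerivAt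
    (f := fun x : ℝ => -4*((p:ℝ)+1)*s^2*R^(2*p+2)/(x^(2*p+2)+3*R^(2*p+2)))
    (f' := fun r : ℝ => 8*((p:ℝ)+1)^2*s^2*R^(2*p+2)*r^(2*p+1)/(r^(2*p+2)+3*R^(2*p+2))^2)
    ?hder ?hint]
  · rw [show (0:ℝ)^(2*p+2) = 0 from zero_pow (by omega), hp]
    have hRne : R^(2*p+2) ≠ 0 := (by positivity : (0:ℝ) < R^(2*p+2)).ne'
    push_cast
    field_simp
    ring
  · intro r _
    have hden : HasDerivAt (fun x : ℝ => x^(2*p+2)+3*R^(2*p+2))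
        (((2*p+2:ℕ):ℝ)*r^(2*p+2-1)) r :=
      (hasDerivAt_pow (2*p+2) r).add_const _
    have h1 := (hasDerivAt_const r (-4*((p:ℝ)+1)*s^2*R^(2*p+2))).div hden (hD2 r).ne'
    refine h1.congr_deriv ?_
    rw [show 2*p+2-1 = 2*p+1 from by omega]
    have hDne : (r^(2*p+2)+3*R^(2*p+2)) ≠ 0 := (hD2 r).ne'
    push_cast
    field_simp
    ring
  · apply Continuous.intervalIntegrable
    apply Continuous.div (by fun_prop) (by fun_prop)
    intro r; exact pow_ne_zero _ (hD2 r).ne'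

theorem energy_of_Yplus (k : ℤ) (hk : k ≠ 0) (R s : ℝ) (hR : 0 < R) (hs : 0 < s) :
    2 * Real.pi * E0 k R (uplus k R s) (vplus k R s) = 2 * (k.natAbs : ℝ) * Real.pi * s ^ 2
    ∧ E0 k R (uminus k R s) (vminus k R s) < E0 k R (uplus k R s) (vplus k R s) := by
  have h1 := E0_plus k hk R s hR
  have h2 := E0_minus k hk R s hR
  have h3 : (0:ℝ) < (k.natAbs:ℝ) := by
    have := Int.natAbs_pos.mpr hk
    exact_mod_cast this
  constructor
  · rw [h1]; ring
  · rw [h1, h2]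
    have h4 : 0 < (k.natAbs:ℝ) * s^2 := by positivity
    linarith
end
end
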